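/- arXiv:2401.14098 — 14 statements merged into one kernel-verified Lean document; each statement's English description precedes it below -/
import Mathlib

section
/- (Lemma 1, stuck-at-1 propagation to the next bit.) Let k ≥ 2 and let x, y < 2^(k+1) with z = (x + y) mod 2^(k+1). Suppose the stuck-at-1 fault at position k−2 of the share x is active, i.e. Nat.testBit x (k−2) = false, and let z* = ((x + 2^(k−2)) + y) mod 2^(k+1). Then Nat.testBit z* (k−1) ≠ Nat.testBit z (k−1) if and only if Nat.testBit z (k−2) = true. -/
lemma aux_testbit_add_pow (s m : ℕ) :
    Nat.testBit (s + 2 ^ m) (m + 1) ≠ Nat.testBit s (m + 1) ↔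
      Nat.testBit s m = true := by
  have hpos : 0 < 2 ^ m := Nat.pow_pos (by norm_num)
  have h1 : (s + 2 ^ m) / 2 ^ m = s / 2 ^ m + 1 := Nat.add_div_right s hpos
  have h2 : ∀ n : ℕ, n / 2 ^ (m + 1) = n / 2 ^ m / 2 := by
    intro n
    rw [pow_succ, Nat.div_div_eq_div_mul]
  simp only [Nat.testBit_eq_decide_div_mod_eq, h2, h1, ne_eq, decide_eq_decide,
    decide_eq_true_eq]
  generalize s / 2 ^ m = q
  omega

/-- Lemma 1: an active stuck-at-1 fault at position `k-2` of the share `x`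
propagates to bit `k-1` of the masked value `z` iff bit `k-2` of `z` is 1. -/
theorem stuck_at_one_propagates_to_next_bit (k : ℕ) (hk : 2 ≤ k)
    (x y : ℕ) (hx : x < 2 ^ (k + 1)) (hy : y < 2 ^ (k + 1))
    (z : ℕ) (hz : z = (x + y) % 2 ^ (k + 1))
    (hactive : Nat.testBit x (k - 2) = false)
    (zstar : ℕ) (hzstar : zstar = ((x + 2 ^ (k - 2)) + y) % 2 ^ (k + 1)) :
    Nat.testBit zstar (k - 1) ≠ Nat.testBit z (k - 1) ↔
      Nat.testBit z (k - 2) = true := by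
  obtain ⟨m, rfl⟩ : ∃ m, k = m + 2 := ⟨k - 2, by omega⟩
  have e1 : m + 2 - 2 = m := by omega
  have e2 : m + 2 - 1 = m + 1 := by omega
  rw [e1] at hactive hzstar ⊢
  rw [e2]
  subst hz hzstar
  have hb : ∀ (n i : ℕ), i < m + 3 →
      Nat.testBit (n % 2 ^ (m + 2 + 1)) i = Nat.testBit n i := by
    intro n i hi
    rw [Nat.testBit_mod_two_pow]
    simp [hi]
  rw [hb _ _ (by omega), hb _ _ (by omega), hb _ _ (by omega)]
  have : x + 2 ^ m + y = (x + y) + 2 ^ m := by ring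
  rw [this]
  exact aux_testbit_add_pow (x + y) m
end

section
/- (Lemma 2, stuck-at-1 propagation to the most significant bit.) Let k ≥ 2 and let x, y < 2^(k+1) with z = (x + y) mod 2^(k+1). Suppose Nat.testBit x (k−2) = false and let z* = ((x + 2^(k−2)) + y) mod 2^(k+1). Then Nat.testBit z* k ≠ Nat.testBit z k if and only if Nat.testBit z (k−2) = true and Nat.testBit z (k−1) = true. -/
/-- Lemma 2: an active stuck-at-1 fault at position `k-2` of the share `x`
propagates to the most significant bit `k` of the masked value `z` iff
bits `k-2` and `k-1` of `z` are both 1. -/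
theorem stuck_at_one_propagates_to_msb (k : ℕ) (hk : 2 ≤ k)
    (x y : ℕ) (hx : x < 2 ^ (k + 1)) (hy : y < 2 ^ (k + 1))
    (z : ℕ) (hz : z = (x + y) % 2 ^ (k + 1))
    (hactive : Nat.testBit x (k - 2) = false)
    (zstar : ℕ) (hzstar : zstar = ((x + 2 ^ (k - 2)) + y) % 2 ^ (k + 1)) :
    Nat.testBit zstar k ≠ Nat.testBit z k ↔
      (Nat.testBit z (k - 2) = true ∧ Nat.testBit z (k - 1) = true) := by
  obtain ⟨m, rfl⟩ : ∃ m, k = m + 2 := ⟨k - 2, by omega⟩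
  have h2 : m + 2 - 2 = m := by omega
  have h1 : m + 2 - 1 = m + 1 := by omega
  rw [h2] at hactive hzstar
  rw [h2, h1]
  set P := 2 ^ m with hPdef
  have hP : 0 < P := Nat.two_pow_pos m
  have hpow3 : 2 ^ (m + 2 + 1) = 8 * P := by rw [hPdef]; ring
  have hpow2 : 2 ^ (m + 2) = P * 4 := by rw [hPdef]; ring
  have hpow1 : 2 ^ (m + 1) = P * 2 := by rw [hPdef]; ring
  rw [hpow3] at hz hzstar
  have hzlt : z < 8 * P := by rw [hz]; exact Nat.mod_lt _ (by omega)
  have hzs : zstar = (z + P) % (8 * P) := by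
    rw [hzstar, hz, Nat.add_right_comm, Nat.add_mod (x + y) P,
      Nat.mod_eq_of_lt (show P < 8 * P by omega)]
  obtain ⟨q, s, hs, hq, hzeq⟩ : ∃ q s, s < P ∧ q < 8 ∧ z = P * q + s := by
    refine ⟨z / P, z % P, Nat.mod_lt _ hP, Nat.div_lt_of_lt_mul (by omega),
      (Nat.div_add_mod z P).symm⟩
  have hzdivP : z / P = q := by
    rw [hzeq, Nat.mul_add_div hP, Nat.div_eq_of_lt hs]; omega
  have hd0 : z / 2 ^ m = q := hzdivP
  have hd1 : z / 2 ^ (m + 1) = q / 2 := by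
    rw [hpow1, ← Nat.div_div_eq_div_mul, hzdivP]
  have hd2 : z / 2 ^ (m + 2) = q / 4 := by
    rw [hpow2, ← Nat.div_div_eq_div_mul, hzdivP]
  have hd2' : zstar / 2 ^ (m + 2) = if q = 7 then 0 else (q + 1) / 4 := by
    rw [hpow2, ← Nat.div_div_eq_div_mul]
    by_cases h7 : q = 7
    · subst h7
      have : zstar = s := by
        rw [hzs, hzeq]
        have e : P * 7 + s + P = s + 8 * P := by ring
        rw [e, Nat.add_mod_right, Nat.mod_eq_of_lt (by omega)]
      rw [this, if_pos rfl, Nat.div_eq_of_lt hs]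
    · have hle : q + 1 ≤ 7 := by omega
      have : zstar = P * (q + 1) + s := by
        rw [hzs, hzeq]
        have e : P * q + s + P = P * (q + 1) + s := by ring
        rw [e]
        refine Nat.mod_eq_of_lt ?_
        have : P * (q + 1) ≤ P * 7 := Nat.mul_le_mul_left P hle
        omega
      rw [this, if_neg h7, Nat.mul_add_div hP, Nat.div_eq_of_lt hs]
  simp only [Nat.testBit_eq_decide_div_mod_eq, hd0, hd1, hd2, hd2', ne_eq,
    decide_eq_decide, decide_eq_true_eq]
  by_cases h7 : q = 7
  · rw [if_pos h7]; subst h7; omega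
  · rw [if_neg h7]; omega
end

section
/- (Lemma 3, message-bit corruption.) Let k ≥ 2 and let x, y < 2^(k+1) with z = (x + y) mod 2^(k+1). Assume the redundant message-bit condition Nat.testBit z (k−1) = Nat.testBit z k (both positions carry the decoded message bit m̂). Suppose Nat.testBit x (k−2) = false and let z* = ((x + 2^(k−2)) + y) mod 2^(k+1). Then the message bit is corrupted, i.e. Nat.testBit z* k ≠ Nat.testBit z k, if and only if Nat.testBit z (k−2) = true and the message bit m̂ = Nat.testBit z k = true. -/
private lemma testBit_shift (n p i : ℕ) :
    Nat.testBit n (p + i) = Nat.testBit (n / 2 ^ p) i := by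
  simp [Nat.testBit_eq_decide_div_mod_eq, Nat.div_div_eq_div_mul, pow_add]

/-- Lemma 3: under the redundant message-bit condition (bits `k-1` and `k` of
`z` both equal the decoded message bit), an active stuck-at-1 fault at
position `k-2` of the share `x` corrupts the message bit iff bit `k-2` of `z`
is 1 and the message bit is 1. -/
theorem stuck_at_one_corrupts_message_bit (k : ℕ) (hk : 2 ≤ k)
    (x y : ℕ) (hx : x < 2 ^ (k + 1)) (hy : y < 2 ^ (k + 1))
    (z : ℕ) (hz : z = (x + y) % 2 ^ (k + 1))
    (hmsg : Nat.testBit z (k - 1) = Nat.testBit z k)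
    (hactive : Nat.testBit x (k - 2) = false)
    (zstar : ℕ) (hzstar : zstar = ((x + 2 ^ (k - 2)) + y) % 2 ^ (k + 1)) :
    Nat.testBit zstar k ≠ Nat.testBit z k ↔
      (Nat.testBit z (k - 2) = true ∧ Nat.testBit z k = true) := by
  obtain ⟨p, rfl⟩ : ∃ p, k = p + 2 := ⟨k - 2, by omega⟩
  have h2 : (p + 2) - 2 = p := by omega
  have h1 : (p + 2) - 1 = p + 1 := by omega
  rw [h2] at hactive hzstar ⊢
  rw [h1] at hmsg
  -- zstar = (z + 2^p) % 2^(p+3)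
  have hM : (2:ℕ) ^ (p + 2 + 1) = 2 ^ p * 8 := by ring
  have hzstar' : zstar = (z + 2 ^ p) % 2 ^ (p + 2 + 1) := by
    rw [hzstar, hz, Nat.mod_add_mod]
    ring_nf
  set a := z % 2 ^ p with ha
  set b := z / 2 ^ p with hb
  have hzlt : z < 2 ^ (p + 2 + 1) := by rw [hz]; exact Nat.mod_lt _ (by positivity)
  have hblt : b < 8 := by
    rw [hb]
    apply Nat.div_lt_of_lt_mul
    rw [← hM]; exact hzlt
  have halt : a < 2 ^ p := Nat.mod_lt _ (by positivity)
  have hzab : z = 2 ^ p * b + a := by rw [ha, hb]; exact (Nat.div_add_mod z (2 ^ p)).symm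
  -- zstar / 2^p = (b+1) % 8
  have hq : zstar = 2 ^ p * ((b + 1) % 8) + a := by
    rw [hzstar', hM, hzab]
    have : 2 ^ p * b + a + 2 ^ p = 2 ^ p * 8 * ((b + 1) / 8) + (2 ^ p * ((b + 1) % 8) + a) := by
      have := Nat.div_add_mod (b + 1) 8
      nlinarith [Nat.div_add_mod (b + 1) 8]
    rw [this, Nat.mul_add_mod]
    apply Nat.mod_eq_of_lt
    have : (b + 1) % 8 < 8 := Nat.mod_lt _ (by norm_num)
    nlinarith
  have hzdiv : z / 2 ^ p = b := hb.symm
  have hqdiv : zstar / 2 ^ p = (b + 1) % 8 := by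
    rw [hq, Nat.mul_add_div (by positivity), Nat.div_eq_of_lt halt]; omega
  have e0 : Nat.testBit z p = Nat.testBit b 0 := by
    have := testBit_shift z p 0; simpa [hzdiv] using this
  have e1 : Nat.testBit z (p + 1) = Nat.testBit b 1 := by
    have := testBit_shift z p 1; rw [this, hzdiv]
  have e2 : Nat.testBit z (p + 2) = Nat.testBit b 2 := by
    have := testBit_shift z p 2; rw [this, hzdiv]
  have e3 : Nat.testBit zstar (p + 2) = Nat.testBit ((b + 1) % 8) 2 := by
    have := testBit_shift zstar p 2; rw [this, hqdiv]
  rw [e1, e2] at hmsg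
  rw [e0, e2, e3]
  interval_cases b <;> (revert hmsg; decide)
end

section
/- (Stuck-at-0 analogue of Lemma 1.) Let k ≥ 2 and let x, y < 2^(k+1) with z = (x + y) mod 2^(k+1). Suppose the stuck-at-0 fault at position k−2 of the share x is active, i.e. Nat.testBit x (k−2) = true, and let z* = ((x − 2^(k−2)) + y) mod 2^(k+1). Then Nat.testBit z* (k−1) ≠ Nat.testBit z (k−1) if and only if Nat.testBit z (k−2) = false. -/
private lemma testBit_aux (p j a t : ℕ) (ha : a < 2 ^ p) :
    Nat.testBit (a + 2 ^ p * t) (p + j) = Nat.testBit t j := by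
  have hp : 0 < 2 ^ p := Nat.pow_pos (by norm_num)
  rw [Nat.testBit_eq_decide_div_mod_eq, Nat.testBit_eq_decide_div_mod_eq, pow_add,
    ← Nat.div_div_eq_div_mul, Nat.add_mul_div_left _ _ hp,
    Nat.div_eq_of_lt ha, Nat.zero_add]

private lemma mod_aux (p a c : ℕ) (ha : a < 2 ^ p) :
    (a + 2 ^ p * c) % (2 ^ p * 8) = a + 2 ^ p * (c % 8) := by
  obtain ⟨q, r, hr, rfl⟩ : ∃ q r, r < 8 ∧ c = 8 * q + r :=
    ⟨c / 8, c % 8, Nat.mod_lt _ (by norm_num), by omega⟩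
  have h8 : (8 * q + r) % 8 = r := by omega
  rw [h8]
  have he : a + 2 ^ p * (8 * q + r) = (a + 2 ^ p * r) + (2 ^ p * 8) * q := by ring
  rw [he, Nat.add_mul_mod_self_left, Nat.mod_eq_of_lt]
  calc a + 2 ^ p * r < 2 ^ p + 2 ^ p * 7 :=
        Nat.add_lt_add_of_lt_of_le ha (Nat.mul_le_mul_left _ (by omega))
    _ = 2 ^ p * 8 := by ring

/-- Stuck-at-0 analogue of Lemma 1: an active stuck-at-0 fault at position
`k-2` of the share `x` propagates to bit `k-1` of `z` iff bit `k-2` of `z`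
is 0. -/
theorem stuck_at_zero_propagates_to_next_bit (k : ℕ) (hk : 2 ≤ k)
    (x y : ℕ) (hx : x < 2 ^ (k + 1)) (hy : y < 2 ^ (k + 1))
    (z : ℕ) (hz : z = (x + y) % 2 ^ (k + 1))
    (hactive : Nat.testBit x (k - 2) = true)
    (zstar : ℕ) (hzstar : zstar = ((x - 2 ^ (k - 2)) + y) % 2 ^ (k + 1)) :
    Nat.testBit zstar (k - 1) ≠ Nat.testBit z (k - 1) ↔
      Nat.testBit z (k - 2) = false := by
  obtain ⟨p, rfl⟩ : ∃ p, k = p + 2 := ⟨k - 2, by omega⟩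
  have e1 : p + 2 - 2 = p := rfl
  have e2 : p + 2 - 1 = p + 1 := rfl
  have e3 : p + 2 + 1 = p + 3 := rfl
  rw [e1] at hactive hzstar
  rw [e3] at hz hzstar hx hy
  rw [e1, e2]
  set P := 2 ^ p with hP
  have hp : 0 < P := Nat.pow_pos (by norm_num)
  have hMeq : 2 ^ (p + 3) = P * 8 := by rw [hP, pow_add]; norm_num
  have hx2 : P ≤ x := by
    by_contra hc
    rw [Nat.testBit_lt_two_pow (by omega)] at hactive
    exact Bool.false_ne_true hactive
  have hzlt : z < P * 8 := by rw [hz, hMeq]; exact Nat.mod_lt _ (by positivity)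
  set A := z % P with hA
  set B := z / P with hB
  have hAlt : A < P := Nat.mod_lt _ hp
  have hzAB : z = A + P * B := by rw [hA, hB, Nat.mod_add_div]
  have hBlt : B < 8 := by
    rw [hB]
    exact Nat.div_lt_iff_lt_mul hp |>.mpr (by omega)
  -- rewrite zstar
  have hzs : zstar = A + P * ((B + 7) % 8) := by
    have step1 : zstar = (z + P * 7) % (P * 8) := by
      rw [hzstar, hMeq, hz, hMeq]
      calc (x - P + y) % (P * 8) = (x - P + y + P * 8) % (P * 8) :=
            (Nat.add_mod_right _ _).symm
        _ = ((x + y) + P * 7) % (P * 8) := by congr 1; omega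
        _ = ((x + y) % (P * 8) + P * 7) % (P * 8) := by rw [Nat.mod_add_mod]
    rw [step1, hzAB]
    have : A + P * B + P * 7 = A + P * (B + 7) := by ring
    rw [this, mod_aux p A (B + 7) hAlt]
  -- compute testBits
  have t1 : Nat.testBit z (p + 1) = Nat.testBit B 1 := by
    rw [hzAB]; exact testBit_aux p 1 A B hAlt
  have t0 : Nat.testBit z p = Nat.testBit B 0 := by
    rw [hzAB]
    have := testBit_aux p 0 A B hAlt
    rwa [Nat.add_zero] at this
  have t2 : Nat.testBit zstar (p + 1) = Nat.testBit ((B + 7) % 8) 1 := by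
    rw [hzs]; exact testBit_aux p 1 A _ hAlt
  rw [t1, t0, t2]
  interval_cases B <;> decide
end

section
/- (Stuck-at-0 analogue of Lemma 2.) Let k ≥ 2 and let x, y < 2^(k+1) with z = (x + y) mod 2^(k+1). Suppose Nat.testBit x (k−2) = true and let z* = ((x − 2^(k−2)) + y) mod 2^(k+1). Then Nat.testBit z* k ≠ Nat.testBit z k if and only if Nat.testBit z (k−2) = false and Nat.testBit z (k−1) = false. -/
lemma testBit_eq_decide_le {n i : ℕ} (h : n < 2 ^ (i + 1)) :
    Nat.testBit n i = decide (2 ^ i ≤ n) := by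
  rcases lt_or_ge n (2 ^ i) with h' | h'
  · simp [Nat.testBit_lt_two_pow h', Nat.not_le.mpr h']
  · have h2' : 2 ^ (i + 1) = 2 ^ i + 2 ^ i := by rw [pow_succ]; ring
    have hd : n / 2 ^ i = 1 := by
      apply Nat.div_eq_of_lt_le <;> omega
    simp [Nat.testBit_eq_decide_div_mod_eq, hd, h']

/-- Stuck-at-0 analogue of Lemma 2: an active stuck-at-0 fault at position
`k-2` of the share `x` propagates to the most significant bit `k` of `z` iff
bits `k-2` and `k-1` of `z` are both 0. -/
theorem stuck_at_zero_propagates_to_msb (k : ℕ) (hk : 2 ≤ k)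
    (x y : ℕ) (hx : x < 2 ^ (k + 1)) (hy : y < 2 ^ (k + 1))
    (z : ℕ) (hz : z = (x + y) % 2 ^ (k + 1))
    (hactive : Nat.testBit x (k - 2) = true)
    (zstar : ℕ) (hzstar : zstar = ((x - 2 ^ (k - 2)) + y) % 2 ^ (k + 1)) :
    Nat.testBit zstar k ≠ Nat.testBit z k ↔
      (Nat.testBit z (k - 2) = false ∧ Nat.testBit z (k - 1) = false) := by
  obtain ⟨m, rfl⟩ : ∃ m, k = m + 2 := ⟨k - 2, by omega⟩
  have hm2 : m + 2 - 2 = m := by omega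
  have hm1 : m + 2 - 1 = m + 1 := by omega
  rw [hm2] at hactive hzstar
  rw [hm2, hm1]
  -- power relations
  have e1 : (2:ℕ) ^ (m + 1) = 2 * 2 ^ m := by rw [pow_succ]; ring
  have e2 : (2:ℕ) ^ (m + 2) = 4 * 2 ^ m := by rw [pow_succ, pow_succ]; ring
  have e3 : (2:ℕ) ^ (m + 2 + 1) = 8 * 2 ^ m := by
    rw [pow_succ, pow_succ, pow_succ]; ring
  have hB : 0 < 2 ^ m := Nat.pow_pos (by norm_num)
  have hxA : 2 ^ m ≤ x := Nat.ge_two_pow_of_testBit hactive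
  -- bounds
  have hzlt : z < 2 ^ (m + 2 + 1) := hz ▸ Nat.mod_lt _ (by positivity)
  have hzstarlt : zstar < 2 ^ (m + 2 + 1) := hzstar ▸ Nat.mod_lt _ (by positivity)
  -- value of zstar
  have hs : x + y = 2 ^ (m + 2 + 1) * ((x + y) / 2 ^ (m + 2 + 1)) + z := by
    rw [hz]; exact (Nat.div_add_mod _ _).symm
  have hcle : (x + y) / 2 ^ (m + 2 + 1) ≤ 1 := by
    have : (x + y) / 2 ^ (m + 2 + 1) < 2 := Nat.div_lt_of_lt_mul (by omega)
    omega
  have hzsval : (zstar = z - 2 ^ m ∧ 2 ^ m ≤ z) ∨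
      (zstar = z + (2 ^ (m + 2 + 1) - 2 ^ m) ∧ z < 2 ^ m) := by
    interval_cases h : (x + y) / 2 ^ (m + 2 + 1)
    · -- no wraparound: x + y = z
      left
      have hv : x - 2 ^ m + y = z - 2 ^ m := by omega
      constructor
      · rw [hzstar, hv, Nat.mod_eq_of_lt (by omega)]
      · omega
    · rcases lt_or_ge z (2 ^ m) with hzs | hzs
      · right
        have hv : x - 2 ^ m + y = z + (2 ^ (m + 2 + 1) - 2 ^ m) := by omega
        exact ⟨by rw [hzstar, hv, Nat.mod_eq_of_lt (by omega)], hzs⟩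
      · left
        have hv : x - 2 ^ m + y = (z - 2 ^ m) + 2 ^ (m + 2 + 1) := by omega
        refine ⟨?_, hzs⟩
        rw [hzstar, hv, Nat.add_mod_right, Nat.mod_eq_of_lt (by omega)]
  -- bit characterizations
  have t1 : Nat.testBit z (m + 2) = decide (2 ^ (m + 2) ≤ z) :=
    testBit_eq_decide_le hzlt
  have t1' : Nat.testBit zstar (m + 2) = decide (2 ^ (m + 2) ≤ zstar) :=
    testBit_eq_decide_le hzstarlt
  have t2 : Nat.testBit z (m + 1) = decide (2 ^ (m + 1) ≤ z % 2 ^ (m + 2)) := by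
    have h := Nat.testBit_mod_two_pow z (m + 2) (m + 1)
    simp only [Nat.lt_add_one, decide_true, Bool.true_and] at h
    rw [← h, testBit_eq_decide_le (Nat.mod_lt _ (by positivity))]
  have t3 : Nat.testBit z m = decide (2 ^ m ≤ z % 2 ^ (m + 1)) := by
    have h := Nat.testBit_mod_two_pow z (m + 1) m
    simp only [Nat.lt_add_one, decide_true, Bool.true_and] at h
    rw [← h, testBit_eq_decide_le (Nat.mod_lt _ (by positivity))]
  rw [t1, t1', t2, t3]
  simp only [ne_eq, decide_eq_decide, decide_eq_false_iff_not]
  -- arithmetic finish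
  have hr2 : z = 2 ^ (m + 2) * (z / 2 ^ (m + 2)) + z % 2 ^ (m + 2) :=
    (Nat.div_add_mod _ _).symm
  have hr2lt : z % 2 ^ (m + 2) < 2 ^ (m + 2) := Nat.mod_lt _ (by positivity)
  have hd2 : z / 2 ^ (m + 2) ≤ 1 := by
    have : z / 2 ^ (m + 2) < 2 := Nat.div_lt_of_lt_mul (by omega)
    omega
  have hr1 : z % 2 ^ (m + 1) = z % 2 ^ (m + 2) % 2 ^ (m + 1) :=
    (Nat.mod_mod_of_dvd z (pow_dvd_pow 2 (by omega))).symm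
  have hr1' : z % 2 ^ (m + 2) = 2 ^ (m + 1) * (z % 2 ^ (m + 2) / 2 ^ (m + 1))
      + z % 2 ^ (m + 2) % 2 ^ (m + 1) := (Nat.div_add_mod _ _).symm
  have hr1lt : z % 2 ^ (m + 2) % 2 ^ (m + 1) < 2 ^ (m + 1) :=
    Nat.mod_lt _ (by positivity)
  have he : z % 2 ^ (m + 2) / 2 ^ (m + 1) ≤ 1 := by
    have : z % 2 ^ (m + 2) / 2 ^ (m + 1) < 2 := Nat.div_lt_of_lt_mul (by omega)
    omega
  interval_cases h2 : z / 2 ^ (m + 2) <;>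
    interval_cases h1 : z % 2 ^ (m + 2) / 2 ^ (m + 1) <;> omega
end

section
/- (Bit-flip faults carry no information.) Let k ≥ 2 and let z < 2^(k+1). For each share value x ∈ [0, 2^(k+1)), set y = (z + 2^(k+1) − x) mod 2^(k+1) (so that (x + y) mod 2^(k+1) = z) and z* = ((x XOR 2^(k−2)) + y) mod 2^(k+1). Then the cardinality of the set of x ∈ [0, 2^(k+1)) for which Nat.testBit z* (k−1) ≠ Nat.testBit z (k−1) equals 2^k, independently of the value of Nat.testBit z (k−2). -/
lemma tb_low (n m a j : ℕ) (hj : j < n) :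
    Nat.testBit (2^n*m + a) j = Nat.testBit a j := by
  have h : (2:ℕ)^n = 2^j * (2 * 2^(n-j-1)) := by
    rw [← pow_succ']; rw [← pow_add]; congr 1; omega
  rw [Nat.testBit_eq_decide_div_mod_eq, Nat.testBit_eq_decide_div_mod_eq, h, mul_assoc,
    Nat.mul_add_div (Nat.two_pow_pos j), mul_assoc, Nat.mul_add_mod]

lemma tb_shift (n m a i : ℕ) (ha : a < 2^n) :
    Nat.testBit (2^n*m + a) (n+i) = Nat.testBit m i := by
  rw [Nat.testBit_eq_decide_div_mod_eq, Nat.testBit_eq_decide_div_mod_eq, pow_add,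
    ← Nat.div_div_eq_div_mul, Nat.mul_add_div (Nat.two_pow_pos n),
    Nat.div_eq_of_lt ha, Nat.add_zero]

lemma tb_high (n m a : ℕ) (ha : a < 2^n) :
    Nat.testBit (2^n*m + a) n = decide (m % 2 = 1) := by
  have := tb_shift n m a 0 ha
  rw [Nat.add_zero] at this
  rw [this, Nat.testBit_eq_decide_div_mod_eq]
  norm_num

lemma xor_flip (p x0 f : ℕ) (h0 : x0 < 2^p) :
    (2^(p+1)*f + x0) ^^^ 2^p = 2^(p+1)*f + (2^p + x0) := by
  apply Nat.eq_of_testBit_eq; intro j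
  rw [Nat.testBit_xor]
  rcases lt_trichotomy j p with h | rfl | h
  · rw [Nat.testBit_two_pow_of_ne (by omega), tb_low _ _ _ _ (by omega),
      tb_low _ _ _ _ (by omega), Nat.testBit_two_pow_add_gt h]
    simp
  · rw [Nat.testBit_two_pow_self, tb_low _ _ _ _ (by omega),
      tb_low _ _ _ _ (by omega), Nat.testBit_two_pow_add_eq,
      Nat.testBit_lt_two_pow h0]
    simp
  · obtain ⟨i, rfl⟩ : ∃ i, j = (p+1) + i := ⟨j - (p+1), by omega⟩
    rw [Nat.testBit_two_pow_of_ne (by omega),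
      tb_shift _ _ _ _ (by omega),
      tb_shift _ _ _ _ (by
        have : (2:ℕ)^(p+1) = 2^p*2 := pow_succ 2 p
        omega)]
    simp

lemma Zstar_plus (N z x t : ℕ) (hz : z < N) (hx : x < N) :
    ((x + t) + (z + N - x) % N) % N = (z + t) % N := by
  rcases le_or_gt x z with h | h
  · rw [show z + N - x = (z - x) + N by omega, Nat.add_mod_right,
      Nat.mod_eq_of_lt (show z - x < N by omega),
      show x + t + (z - x) = z + t by omega]
  · rw [Nat.mod_eq_of_lt (show z + N - x < N by omega),
      show x + t + (z + N - x) = (z + t) + N by omega, Nat.add_mod_right]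

lemma Zstar_minus (N z x t : ℕ) (hz : z < N) (hx : x < N) (ht : t ≤ x) :
    ((x - t) + (z + N - x) % N) % N = (z + N - t) % N := by
  rcases le_or_gt x z with h | h
  · rw [show z + N - x = (z - x) + N by omega, Nat.add_mod_right,
      Nat.mod_eq_of_lt (show z - x < N by omega),
      show x - t + (z - x) = z - t by omega,
      show z + N - t = (z - t) + N by omega, Nat.add_mod_right]
  · rw [Nat.mod_eq_of_lt (show z + N - x < N by omega),
      show x - t + (z + N - x) = z + N - t by omega]

lemma decomp (p w : ℕ) (hw : w < 2^(p+3)) :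
    ∃ w0 b g, w0 < 2^p ∧ b < 2 ∧ g < 4 ∧ w = 2^(p+1)*g + (2^p*b + w0) := by
  have hP := Nat.two_pow_pos p
  have h1 := Nat.div_add_mod w (2^p)
  have h2 := Nat.div_add_mod (w / 2^p) 2
  have hp3 : (2:ℕ)^(p+3) = 2^p*8 := by rw [pow_add]; norm_num
  have hq : w / 2^p < 8 := by
    apply Nat.div_lt_of_lt_mul; omega
  refine ⟨w % 2^p, (w/2^p) % 2, w/2^p/2, Nat.mod_lt _ hP, by omega, by omega, ?_⟩
  have hpow : (2:ℕ)^(p+1) = 2^p*2 := pow_succ 2 p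
  have key : 2^p*2*(w/2^p/2) + (2^p*((w/2^p)%2) + w%2^p)
      = 2^p*(2*(w/2^p/2)+(w/2^p)%2) + w%2^p := by ring
  rw [hpow, key, h2, h1]

lemma cond_iff (p z x : ℕ) (hz : z < 2^(p+3)) (hx : x < 2^(p+3)) :
    (Nat.testBit (((x ^^^ 2^p) + ((z + 2^(p+3) - x) % 2^(p+3))) % 2^(p+3)) (p+1)
      ≠ Nat.testBit z (p+1)) ↔ Nat.testBit x p = !Nat.testBit z p := by
  obtain ⟨z0, b, g, hz0, hb, hg, rfl⟩ := decomp p z hz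
  obtain ⟨x0, e, f, hx0, he, hf, rfl⟩ := decomp p x hx
  have hp1 : (2:ℕ)^(p+1) = 2^p*2 := pow_succ 2 p
  have hp3 : (2:ℕ)^(p+3) = 2^p*8 := by rw [pow_add]; norm_num
  have hzb : 2^p*b ≤ 2^p := le_trans (Nat.mul_le_mul_left _ (by omega)) (le_of_eq (mul_one _))
  have hxe : 2^p*e ≤ 2^p := le_trans (Nat.mul_le_mul_left _ (by omega)) (le_of_eq (mul_one _))
  have hlt : p+1 < p+3 := by omega
  have hzp1 : Nat.testBit (2^(p+1)*g + (2^p*b + z0)) (p+1) = decide (g % 2 = 1) :=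
    tb_high _ _ _ (by omega)
  have hzp : Nat.testBit (2^(p+1)*g + (2^p*b + z0)) p = decide (b % 2 = 1) := by
    rw [tb_low _ _ _ _ (by omega), tb_high _ _ _ hz0]
  have hxp : Nat.testBit (2^(p+1)*f + (2^p*e + x0)) p = decide (e % 2 = 1) := by
    rw [tb_low _ _ _ _ (by omega), tb_high _ _ _ hx0]
  rw [hzp1, hzp, hxp]
  interval_cases e
  · -- e = 0 : xor adds 2^p
    have hxor : (2^(p+1)*f + (2^p*0 + x0)) ^^^ 2^p
        = (2^(p+1)*f + (2^p*0 + x0)) + 2^p := by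
      rw [show 2^(p+1)*f + (2^p*0 + x0) = 2^(p+1)*f + x0 by ring, xor_flip p x0 f hx0]
      ring
    rw [hxor, Zstar_plus _ _ _ _ hz hx, Nat.testBit_mod_two_pow]
    simp only [hlt, decide_true, Bool.true_and]
    interval_cases b
    · rw [show 2^(p+1)*g + (2^p*0 + z0) + 2^p = 2^(p+1)*g + (2^p + z0) by ring,
        tb_high _ _ _ (by omega)]
      simp
    · rw [show 2^(p+1)*g + (2^p*1 + z0) + 2^p = 2^(p+1)*(g+1) + z0 by rw [hp1]; ring,
        tb_high _ _ _ (by omega)]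
      rcases Nat.mod_two_eq_zero_or_one g with h | h <;> simp [Nat.add_mod, h]
  · -- e = 1 : xor subtracts 2^p
    have h1 : 2^(p+1)*f + (2^p*1 + x0) = (2^(p+1)*f + x0) ^^^ 2^p := by
      rw [xor_flip p x0 f hx0]; ring
    have hxor : (2^(p+1)*f + (2^p*1 + x0)) ^^^ 2^p
        = (2^(p+1)*f + (2^p*1 + x0)) - 2^p := by
      rw [h1, xor_cancel_right]; omega
    rw [hxor, Zstar_minus _ _ _ _ hz hx (by omega), Nat.testBit_mod_two_pow]
    simp only [hlt, decide_true, Bool.true_and]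
    interval_cases b
    · rw [show 2^(p+1)*g + (2^p*0 + z0) + 2^(p+3) - 2^p
          = 2^(p+1)*(g+3) + (2^p + z0) by rw [hp1, hp3]; apply Nat.sub_eq_of_eq_add; ring,
        tb_high _ _ _ (by omega)]
      rcases Nat.mod_two_eq_zero_or_one g with h | h <;> simp [Nat.add_mod, h]
    · rw [show 2^(p+1)*g + (2^p*1 + z0) + 2^(p+3) - 2^p
          = 2^(p+1)*(g+4) + z0 by rw [hp1, hp3]; apply Nat.sub_eq_of_eq_add; ring,
        tb_high _ _ _ (by omega)]
      rcases Nat.mod_two_eq_zero_or_one g with h | h <;> simp [Nat.add_mod, h]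

lemma count_bit (s j : ℕ) (hj : j ≤ s) (b : Bool) :
    ((Finset.range (2^(s+1))).filter (fun x => Nat.testBit x j = b)).card = 2^s := by
  have hmap : ∀ c : Bool, ∀ x ∈ (Finset.range (2^(s+1))).filter
      (fun x => Nat.testBit x j = c),
      x ^^^ 2^j ∈ (Finset.range (2^(s+1))).filter (fun x => Nat.testBit x j = !c) := by
    intro c x hx
    simp only [Finset.mem_filter, Finset.mem_range] at hx ⊢
    refine ⟨Nat.xor_lt_two_pow hx.1 (Nat.pow_lt_pow_right one_lt_two (by omega)), ?_⟩
    rw [Nat.testBit_xor, Nat.testBit_two_pow_self, hx.2]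
    simp
  have hcardeq : ((Finset.range (2^(s+1))).filter (fun x => Nat.testBit x j = b)).card
      = ((Finset.range (2^(s+1))).filter (fun x => Nat.testBit x j = !b)).card := by
    refine Finset.card_nbij' (fun x => x ^^^ 2^j) (fun x => x ^^^ 2^j) (hmap b) ?_ ?_ ?_
    · intro x hx; have := hmap (!b) x hx; simpa using this
    · intro a _; simp [xor_cancel_right]
    · intro a _; simp [xor_cancel_right]
  have hsplit := Finset.card_filter_add_card_filter_not
    (s := Finset.range (2^(s+1))) (fun x => Nat.testBit x j = b)
  have hneg : (Finset.range (2^(s+1))).filter (fun x => ¬(Nat.testBit x j = b))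
      = (Finset.range (2^(s+1))).filter (fun x => Nat.testBit x j = !b) := by
    apply Finset.filter_congr
    intro x _
    cases b <;> simp
  rw [Finset.card_range, hneg, ← hcardeq] at hsplit
  have : (2:ℕ)^(s+1) = 2*2^s := by ring
  omega

/-- Bit-flip faults carry no information: over all `2^(k+1)` share values `x`
of `z`, the number of shares for which a bit-flip fault at position `k-2`
propagates to bit `k-1` equals `2^k`, independently of bit `k-2` of `z`. -/
theorem bit_flip_fault_no_information (k : ℕ) (hk : 2 ≤ k)
    (z : ℕ) (hz : z < 2 ^ (k + 1)) :
    ((Finset.range (2 ^ (k + 1))).filter (fun x =>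
        Nat.testBit
          (((x ^^^ 2 ^ (k - 2)) + ((z + 2 ^ (k + 1) - x) % 2 ^ (k + 1)))
            % 2 ^ (k + 1)) (k - 1)
          ≠ Nat.testBit z (k - 1))).card = 2 ^ k := by
  obtain ⟨p, rfl⟩ : ∃ p, k = p + 2 := ⟨k - 2, by omega⟩
  simp only [show p + 2 - 2 = p by omega, show p + 2 - 1 = p + 1 by omega,
    show p + 2 + 1 = p + 3 by omega] at hz ⊢
  have hfc : ∀ x ∈ Finset.range (2^(p+3)),
      ((Nat.testBit (((x ^^^ 2^p) + ((z + 2^(p+3) - x) % 2^(p+3))) % 2^(p+3)) (p+1)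
        ≠ Nat.testBit z (p+1)) ↔ (Nat.testBit x p = !Nat.testBit z p)) :=
    fun x hx => cond_iff p z x hz (Finset.mem_range.mp hx)
  rw [Finset.filter_congr hfc, count_bit (p+2) p (by omega)]
end

section
/- (Stuck-at-1 activation and propagation count.) Let k ≥ 2 and let z < 2^(k+1). For each share value x ∈ [0, 2^(k+1)), set y = (z + 2^(k+1) − x) mod 2^(k+1) and z* = ((x + 2^(k−2)) + y) mod 2^(k+1). Then the cardinality of the set of x ∈ [0, 2^(k+1)) satisfying both Nat.testBit x (k−2) = false (the fault is active) and Nat.testBit z* (k−1) ≠ Nat.testBit z (k−1) (the fault propagates) equals 2^k if Nat.testBit z (k−2) = true, and equals 0 if Nat.testBit z (k−2) = false. -/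
lemma card_filter_testBit_false (n i : ℕ) (hi : i < n) :
    ((Finset.range (2 ^ n)).filter (fun x => Nat.testBit x i = false)).card
      = 2 ^ (n - 1) := by
  have h2 : 2 ^ i < 2 ^ n := Nat.pow_lt_pow_right (by norm_num) hi
  have hbij : ((Finset.range (2 ^ n)).filter (fun x => Nat.testBit x i = false)).card
      = ((Finset.range (2 ^ n)).filter (fun x => ¬ (Nat.testBit x i = false))).card := by
    refine Finset.card_bij' (fun x _ => x ^^^ 2 ^ i) (fun x _ => x ^^^ 2 ^ i) ?_ ?_ ?_ ?_
    · intro a ha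
      simp only [Finset.mem_filter, Finset.mem_range] at ha ⊢
      refine ⟨Nat.xor_lt_two_pow ha.1 h2, ?_⟩
      simp [Nat.testBit_xor, Nat.testBit_two_pow_self, ha.2]
    · intro a ha
      simp only [Finset.mem_filter, Finset.mem_range, Bool.not_eq_false] at ha ⊢
      refine ⟨Nat.xor_lt_two_pow ha.1 h2, ?_⟩
      simp [Nat.testBit_xor, Nat.testBit_two_pow_self, ha.2]
    · intro a _
      simp [Nat.xor_xor_cancel_right]
    · intro a _
      simp [Nat.xor_xor_cancel_right]
  have htot : ((Finset.range (2 ^ n)).filter (fun x => Nat.testBit x i = false)).card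
      + ((Finset.range (2 ^ n)).filter (fun x => ¬ (Nat.testBit x i = false))).card
      = 2 ^ n := by
    rw [Finset.card_filter_add_card_filter_not, Finset.card_range]
  have hn : 2 ^ n = 2 * 2 ^ (n - 1) := by
    calc 2 ^ n = 2 ^ (n - 1 + 1) := by rw [Nat.sub_add_cancel (by omega)]
    _ = 2 * 2 ^ (n - 1) := by rw [pow_succ]; ring
  omega

/-- Stuck-at-1 activation and propagation count: over all `2^(k+1)` share
values `x` of `z`, the number of shares for which the stuck-at-1 fault at
position `k-2` is active and propagates to bit `k-1` equals `2^k` if bit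
`k-2` of `z` is 1, and `0` otherwise. -/
theorem stuck_at_one_activation_propagation_count (k : ℕ) (hk : 2 ≤ k)
    (z : ℕ) (hz : z < 2 ^ (k + 1)) :
    ((Finset.range (2 ^ (k + 1))).filter (fun x =>
        Nat.testBit x (k - 2) = false ∧
        Nat.testBit
          (((x + 2 ^ (k - 2)) + ((z + 2 ^ (k + 1) - x) % 2 ^ (k + 1)))
            % 2 ^ (k + 1)) (k - 1)
          ≠ Nat.testBit z (k - 1))).card =
      (if Nat.testBit z (k - 2) = true then 2 ^ k else 0) := by
  obtain ⟨m, rfl⟩ : ∃ m, k = m + 2 := ⟨k - 2, by omega⟩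
  have hm2 : m + 2 - 2 = m := by omega
  have hm1 : m + 2 - 1 = m + 1 := by omega
  rw [hm2, hm1]
  -- the faulty result is independent of x
  have key : ∀ x ∈ Finset.range (2 ^ (m + 2 + 1)),
      ((x + 2 ^ m) + ((z + 2 ^ (m + 2 + 1) - x) % 2 ^ (m + 2 + 1))) % 2 ^ (m + 2 + 1)
        = (z + 2 ^ m) % 2 ^ (m + 2 + 1) := by
    intro x hx
    rw [Finset.mem_range] at hx
    rw [Nat.add_mod_mod]
    have hx' : x + 2 ^ m + (z + 2 ^ (m + 2 + 1) - x) = z + 2 ^ m + 2 ^ (m + 2 + 1) := by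
      omega
    rw [hx', Nat.add_mod_right]
  -- the propagation condition, constant in x
  have hfc : (Finset.range (2 ^ (m + 2 + 1))).filter (fun x =>
        Nat.testBit x m = false ∧
        Nat.testBit
          (((x + 2 ^ m) + ((z + 2 ^ (m + 2 + 1) - x) % 2 ^ (m + 2 + 1)))
            % 2 ^ (m + 2 + 1)) (m + 1)
          ≠ Nat.testBit z (m + 1))
      = (Finset.range (2 ^ (m + 2 + 1))).filter (fun x =>
          Nat.testBit x m = false ∧
          Nat.testBit ((z + 2 ^ m) % 2 ^ (m + 2 + 1)) (m + 1)
            ≠ Nat.testBit z (m + 1)) := by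
    apply Finset.filter_congr
    intro x hx
    rw [key x hx]
  rw [hfc]
  -- propagation holds iff bit m of z is set
  have hCiff : (Nat.testBit ((z + 2 ^ m) % 2 ^ (m + 2 + 1)) (m + 1)
      ≠ Nat.testBit z (m + 1)) ↔ Nat.testBit z m = true := by
    have hlt : m + 1 < m + 2 + 1 := by omega
    rw [Nat.testBit_mod_two_pow]
    simp only [show decide (m + 1 < m + 2 + 1) = true from by simp [hlt], Bool.true_and]
    have hdiv : (z + 2 ^ m) / 2 ^ (m + 1) = (z / 2 ^ m + 1) / 2 := by
      rw [pow_succ, ← Nat.div_div_eq_div_mul,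
        Nat.add_div_right _ (Nat.pow_pos (n := m) (by norm_num))]
    rw [Nat.testBit_eq_decide_div_mod_eq, Nat.testBit_eq_decide_div_mod_eq, Nat.testBit_eq_decide_div_mod_eq, hdiv]
    have hq : z / 2 ^ (m + 1) = z / 2 ^ m / 2 := by
      rw [pow_succ, Nat.div_div_eq_div_mul]
    rw [hq]
    simp only [ne_eq, decide_eq_decide, decide_eq_true_eq]
    generalize z / 2 ^ m = q
    omega
  by_cases hz2 : Nat.testBit z m = true
  · rw [hz2]
    simp only [if_true]
    have heq : (Finset.range (2 ^ (m + 2 + 1))).filter (fun x =>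
          Nat.testBit x m = false ∧
          Nat.testBit ((z + 2 ^ m) % 2 ^ (m + 2 + 1)) (m + 1)
            ≠ Nat.testBit z (m + 1))
        = (Finset.range (2 ^ (m + 2 + 1))).filter (fun x =>
          Nat.testBit x m = false) := by
      apply Finset.filter_congr
      intro x _
      have := hCiff.mpr hz2
      tauto
    rw [heq, card_filter_testBit_false _ _ (by omega)]
    norm_num
  · have hz3 : Nat.testBit z m = false := by
      simpa using hz2
    rw [hz3]
    simp only [Bool.false_eq_true, if_false]
    rw [Finset.card_eq_zero, Finset.filter_eq_empty_iff]
    intro x _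
    have : ¬ (Nat.testBit ((z + 2 ^ m) % 2 ^ (m + 2 + 1)) (m + 1)
        ≠ Nat.testBit z (m + 1)) := fun h => hz2 (hCiff.mp h)
    tauto
end

section
/- (Higher-order masking version of Lemma 2.) Let k ≥ 2, let t be a natural number, and let x : Fin (t+1) → ℕ be t+1 arithmetic shares with z = (∑ i, x i) mod 2^(k+1). Suppose Nat.testBit (x 0) (k−2) = false and let z* = ((∑ i, x i) + 2^(k−2)) mod 2^(k+1) (the sum after the stuck-at-1 fault on share x 0). Then Nat.testBit z* k ≠ Nat.testBit z k if and only if Nat.testBit z (k−2) = true and Nat.testBit z (k−1) = true. In particular, the fault-propagation leakage is unaffected by the masking order t. -/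
/-- Higher-order masking version of Lemma 2: with `t+1` arithmetic shares of
`z`, an active stuck-at-1 fault at position `k-2` of the share `x 0`
propagates to the most significant bit `k` of `z` iff bits `k-2` and `k-1` of
`z` are both 1; the leakage is unaffected by the masking order `t`. -/
theorem stuck_at_one_higher_order_masking (k t : ℕ) (hk : 2 ≤ k)
    (x : Fin (t + 1) → ℕ)
    (z : ℕ) (hz : z = (∑ i, x i) % 2 ^ (k + 1))
    (hactive : Nat.testBit (x 0) (k - 2) = false)
    (zstar : ℕ) (hzstar : zstar = ((∑ i, x i) + 2 ^ (k - 2)) % 2 ^ (k + 1)) :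
    Nat.testBit zstar k ≠ Nat.testBit z k ↔
      (Nat.testBit z (k - 2) = true ∧ Nat.testBit z (k - 1) = true) := by
  obtain ⟨p, rfl⟩ : ∃ p, k = p + 2 := ⟨k - 2, by omega⟩
  clear hk hactive
  set S := ∑ i, x i with hS
  set M := 2 ^ (p + 2 + 1) with hM
  have hMpos : 0 < M := Nat.pow_pos (by norm_num)
  have h2p : 2 ^ p < M := by
    apply Nat.pow_lt_pow_right (by norm_num); omega
  subst hz hzstar
  set z := S % M with hzdef
  have hzlt : z < M := Nat.mod_lt _ hMpos
  have key : (S + 2 ^ (p + 2 - 2)) % M = (z + 2 ^ p) % M := by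
    have : p + 2 - 2 = p := by omega
    rw [this, Nat.add_mod S, Nat.mod_eq_of_lt h2p]
  rw [key]
  have hp2 : p + 2 - 2 = p := by omega
  have hp1 : p + 2 - 1 = p + 1 := by omega
  rw [hp2, hp1]
  -- deal with the outer mod
  have hbit : Nat.testBit ((z + 2 ^ p) % M) (p + 2) = Nat.testBit (z + 2 ^ p) (p + 2) := by
    rw [hM, Nat.testBit_mod_two_pow]
    simp
  rw [hbit]
  -- express everything via q = z / 2^p
  set q := z / 2 ^ p with hq
  have hpow : 0 < 2 ^ p := Nat.pow_pos (by norm_num)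
  have hq8 : q < 8 := by
    rw [hq]
    apply Nat.div_lt_of_lt_mul
    calc z < M := hzlt
    _ = 2 ^ p * 8 := by rw [hM]; ring
  have hd2 : z / 2 ^ (p + 2) = q / 4 := by
    rw [hq, Nat.div_div_eq_div_mul, pow_add]; norm_num
  have hd1 : z / 2 ^ (p + 1) = q / 2 := by
    rw [hq, Nat.div_div_eq_div_mul, pow_add]; norm_num
  have hd3 : (z + 2 ^ p) / 2 ^ (p + 2) = (q + 1) / 4 := by
    have h1 : (z + 2 ^ p) / 2 ^ p = q + 1 := by
      rw [Nat.add_div_right _ hpow, hq]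
    rw [show (2:ℕ) ^ (p + 2) = 2 ^ p * 4 by rw [pow_add]; norm_num,
      ← Nat.div_div_eq_div_mul, h1]
  have hd0 : z / 2 ^ p = q := hq.symm
  simp only [Nat.testBit_eq_decide_div_mod_eq, hd0, hd1, hd2, hd3, ne_eq, decide_eq_decide,
    decide_eq_true_eq]
  omega
end

section
/- (Kyber, stuck-at-1 fault at the 11th bit.) Let x, y < 2^13 with z = (x + y) mod 2^13, and assume the Kyber message-bit condition Nat.testBit z 11 = Nat.testBit z 12. Suppose Nat.testBit x 10 = false (the stuck-at-1 fault at the 11th bit of the share is active) and let z* = ((x + 2^10) + y) mod 2^13. Then the decoded message bit is corrupted, i.e. Nat.testBit z* 12 ≠ Nat.testBit z 12, if and only if z ≥ 2^12 + 2^11 + 2^10 = 7168 (equivalently, z lies in {7168, …, 8191}). -/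
/-- Kyber, stuck-at-1 fault at the 11th bit (position 10): the decoded
message bit is corrupted iff `z ≥ 7168`. -/
theorem kyber_stuck_at_one_eleventh_bit
    (x y : ℕ) (hx : x < 2 ^ 13) (hy : y < 2 ^ 13)
    (z : ℕ) (hz : z = (x + y) % 2 ^ 13)
    (hmsg : Nat.testBit z 11 = Nat.testBit z 12)
    (hactive : Nat.testBit x 10 = false)
    (zstar : ℕ) (hzstar : zstar = ((x + 2 ^ 10) + y) % 2 ^ 13) :
    Nat.testBit zstar 12 ≠ Nat.testBit z 12 ↔ 7168 ≤ z := by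
  subst hz hzstar
  simp only [Nat.testBit_eq_decide_div_mod_eq, decide_eq_decide, ne_eq] at hmsg ⊢
  omega
end

section
/- (Saber, stuck-at-0 fault at bit ε_p − 1 = 9, i.e. position 8.) Let x, y < 2^10 with z = (x + y) mod 2^10. Suppose Nat.testBit x 8 = true (the fault is active) and let z* = ((x − 2^8) + y) mod 2^10. Then the decoded message bit (the most significant bit) is corrupted, i.e. Nat.testBit z* 9 ≠ Nat.testBit z 9, if and only if z ∈ {0, …, 255} ∪ {512, …, 767} (equivalently, z mod 512 < 256). -/
/-- Saber, stuck-at-0 fault at position 8: the decoded message bit (the MSB,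
bit 9) is corrupted iff `z mod 512 < 256`. -/
theorem saber_stuck_at_zero
    (x y : ℕ) (hx : x < 2 ^ 10) (hy : y < 2 ^ 10)
    (z : ℕ) (hz : z = (x + y) % 2 ^ 10)
    (hactive : Nat.testBit x 8 = true)
    (zstar : ℕ) (hzstar : zstar = ((x - 2 ^ 8) + y) % 2 ^ 10) :
    Nat.testBit zstar 9 ≠ Nat.testBit z 9 ↔ z % 512 < 256 := by
  have hx8 : x / 2 ^ 8 % 2 = 1 := by
    simpa [Nat.testBit_eq_decide_div_mod_eq] using hactive
  subst hz hzstar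
  rw [Ne, Nat.testBit_eq_decide_div_mod_eq, Nat.testBit_eq_decide_div_mod_eq, decide_eq_decide]
  omega
end

section
/- (General carry-propagation lemma.) Let N, p, j be natural numbers with p < j < N, let z < 2^N, and let z* = (z + 2^p) mod 2^N. Then Nat.testBit z* j ≠ Nat.testBit z j if and only if Nat.testBit z i = true for every i with p ≤ i < j. (This is the common generalization, by repeated application of Lemma 2, underlying Lemmas 1–3 and the claim that a fault reaching the 13th bit in a 16-bit register also reaches the 16th bit.) -/
lemma succ_testBit_flip (k : ℕ) : ∀ b : ℕ,
    (Nat.testBit (b + 1) k ≠ Nat.testBit b k) ↔ (∀ i < k, Nat.testBit b i = true) := by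
  induction k with
  | zero =>
    intro b
    simp only [Nat.testBit_zero]
    constructor
    · intro _ i hi; omega
    · intro _; simp only [ne_eq, decide_eq_decide]; omega
  | succ k ih =>
    intro b
    rcases Nat.even_or_odd b with he | ho
    · have h2 : b % 2 = 0 := Nat.even_iff.mp he
      have hdiv : (b + 1) / 2 = b / 2 := by omega
      have hb0 : Nat.testBit b 0 = false := by
        simp [Nat.testBit_zero, h2]
      constructor
      · intro h; exfalso; apply h
        rw [Nat.testBit_add_one, Nat.testBit_add_one, hdiv]
      · intro h; exfalso
        have := h 0 (by omega)
        rw [hb0] at this; exact absurd this (by simp)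
    · have h2 : b % 2 = 1 := Nat.odd_iff.mp ho
      have hdiv : (b + 1) / 2 = b / 2 + 1 := by omega
      have hb0 : Nat.testBit b 0 = true := by
        simp [Nat.testBit_zero, h2]
      rw [Nat.testBit_add_one, Nat.testBit_add_one, hdiv, ih (b / 2)]
      constructor
      · intro h i hi
        match i with
        | 0 => exact hb0
        | i + 1 =>
          rw [Nat.testBit_add_one]
          exact h i (by omega)
      · intro h i hi
        have := h (i + 1) (by omega)
        rwa [Nat.testBit_add_one] at this
/-- General carry-propagation lemma: adding `2^p` to `z` modulo `2^N` flips
bit `j` (with `p < j < N`) iff all bits of `z` in positions `p ≤ i < j` are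
1. -/
theorem carry_propagation (N p j : ℕ) (hpj : p < j) (hjN : j < N)
    (z : ℕ) (hz : z < 2 ^ N)
    (zstar : ℕ) (hzstar : zstar = (z + 2 ^ p) % 2 ^ N) :
    Nat.testBit zstar j ≠ Nat.testBit z j ↔
      (∀ i, p ≤ i → i < j → Nat.testBit z i = true) := by
  subst hzstar
  rw [Nat.testBit_mod_two_pow]
  simp only [hjN, decide_true, Bool.true_and]
  set b := z / 2 ^ p with hb
  set k := j - p with hk
  have hquot : (z + 2 ^ p) / 2 ^ p = b + 1 := by
    rw [Nat.add_div_right _ (Nat.two_pow_pos p)]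
  have hbit : ∀ m : ℕ, Nat.testBit (m / 2 ^ p) k = Nat.testBit m j := by
    intro m
    have : m / 2 ^ p = m >>> p := (Nat.shiftRight_eq_div_pow m p).symm
    rw [this, Nat.testBit_shiftRight]
    congr 1; omega
  have h1 : Nat.testBit (z + 2 ^ p) j = Nat.testBit (b + 1) k := by
    rw [← hbit (z + 2 ^ p), hquot]
  have h2 : Nat.testBit z j = Nat.testBit b k := (hbit z).symm
  rw [h1, h2, succ_testBit_flip k b]
  constructor
  · intro h i hpi hij
    have := h (i - p) (by omega)
    rw [hb, ← Nat.shiftRight_eq_div_pow, Nat.testBit_shiftRight] at this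
    convert this using 2; omega
  · intro h i hi
    have := h (p + i) (by omega) (by omega)
    rw [hb, ← Nat.shiftRight_eq_div_pow, Nat.testBit_shiftRight]
    exact this
end

section
/- (Multi-bit stuck-at-1 faults on the 8 least significant bits do not corrupt the message bit.) Let x, y < 2^13 with z = (x + y) mod 2^13 and 6944 ≤ z ≤ 7776 (the high-probability range of a coefficient decoding to message bit 1). Then for every mask < 256, the faulted sum z* = ((x ||| mask) + y) mod 2^13 (where ||| is bitwise OR) still satisfies Nat.testBit z* 12 = true; i.e. the decoded message bit remains 1 and no decryption failure occurs. -/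
/-- Multi-bit stuck-at-1 faults on the 8 least significant bits of a share
do not corrupt the message bit when the coefficient lies in the
high-probability range `[6944, 7776]` for message bit 1. -/
theorem lsb_stuck_at_one_no_corruption
    (x y : ℕ) (hx : x < 2 ^ 13) (hy : y < 2 ^ 13)
    (z : ℕ) (hz : z = (x + y) % 2 ^ 13)
    (hzlo : 6944 ≤ z) (hzhi : z ≤ 7776)
    (mask : ℕ) (hmask : mask < 256)
    (zstar : ℕ) (hzstar : zstar = ((x ||| mask) + y) % 2 ^ 13) :
    Nat.testBit zstar 12 = true := by
  have h1 : x ≤ x ||| mask := Nat.le_of_testBit (by simp +contextual)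
  have hdiv : (x ||| mask) / 2 ^ 8 = x / 2 ^ 8 := by
    have := congrArg (· / 2 ^ 8) (rfl : x ||| mask = x ||| mask)
    have hsr : (x ||| mask) >>> 8 = x >>> 8 := by
      apply Nat.eq_of_testBit_eq
      intro i
      simp only [Nat.testBit_shiftRight, Nat.testBit_or]
      have : mask.testBit (8 + i) = false :=
        Nat.testBit_lt_two_pow (lt_of_lt_of_le hmask (by
          calc (256 : ℕ) = 2 ^ 8 := by norm_num
          _ ≤ 2 ^ (8 + i) := Nat.pow_le_pow_right (by norm_num) (by omega)))
      simp [this]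
    simpa [Nat.shiftRight_eq_div_pow] using hsr
  have h2 : x ||| mask ≤ x + 255 := by omega
  have hbit : 4096 ≤ zstar ∧ zstar < 8192 := by omega
  rw [Nat.testBit_eq_decide_div_mod_eq]
  simp only [decide_eq_true_eq]
  omega
end

section
/- (Multi-bit stuck-at-0 faults on the 8 least significant bits do not corrupt the message bit.) Let x, y < 2^13 with z = (x + y) mod 2^13 and 6944 ≤ z ≤ 7776 (the high-probability range of a coefficient decoding to message bit 1). Then for every mask < 256, the faulted sum z* = ((x − (x &&& mask)) + y) mod 2^13 (where &&& is bitwise AND, so x − (x &&& mask) clears the masked low bits of x) still satisfies Nat.testBit z* 12 = true; i.e. the decoded message bit remains 1 and no decryption failure occurs. -/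
/-- Multi-bit stuck-at-0 faults on the 8 least significant bits of a share
do not corrupt the message bit when the coefficient lies in the
high-probability range `[6944, 7776]` for message bit 1. -/
theorem lsb_stuck_at_zero_no_corruption
    (x y : ℕ) (hx : x < 2 ^ 13) (hy : y < 2 ^ 13)
    (z : ℕ) (hz : z = (x + y) % 2 ^ 13)
    (hzlo : 6944 ≤ z) (hzhi : z ≤ 7776)
    (mask : ℕ) (hmask : mask < 256)
    (zstar : ℕ) (hzstar : zstar = ((x - (x &&& mask)) + y) % 2 ^ 13) :
    Nat.testBit zstar 12 = true := by
  have hd1 : x &&& mask ≤ x := Nat.and_le_left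
  have hd2 : x &&& mask ≤ mask := Nat.and_le_right
  rw [Nat.testBit_eq_decide_div_mod_eq]
  simp only [decide_eq_true_eq]
  omega
end

section
/- (Kyber decode correctness under bounded noise.) Let q = 3329 and ⌈q/2⌋ = 1665. For every m ∈ {0, 1} and every integer d with −832 ≤ d ≤ 831, let w ∈ [0, q) be the representative of (1665·m + d) mod q. Then Kyber's decode function recovers m: ((2·w + 1664) / 3329) mod 2 = m, where / denotes integer (floor) division. -/
/-- Kyber decode correctness under bounded noise: for a message bit
`m ∈ {0, 1}` and decryption noise `d` with `-832 ≤ d ≤ 831`, the decode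
function applied to the representative `w ∈ [0, q)` of `(1665*m + d) mod q`
recovers `m` (with `q = 3329`). -/
theorem kyber_decode_correct
    (m : ℕ) (hm : m = 0 ∨ m = 1)
    (d : ℤ) (hd1 : -832 ≤ d) (hd2 : d ≤ 831)
    (w : ℕ) (hwlt : w < 3329)
    (hw : (w : ℤ) = (1665 * (m : ℤ) + d) % 3329) :
    (2 * w + 1664) / 3329 % 2 = m := by
  rcases hm with h | h <;> subst h <;> simp at hw <;> omega
end
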